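/- For the Kuramoto model with symmetric coupling matrix J and common natural frequency ω, the energy along any solution is non-increasing: the function t ↦ U(φ(t)) = Σ_{i,j} J i j · (1 − cos(φ_i(t) − φ_j(t))) is monotone non-increasing in t, i.e., the Kuramoto dynamics is Lyapunov with energy U. -/

import Mathlib

/-- for the Kuramoto model with symmetric coupling matrix `J` and
common natural frequency `ω`, the energy
`U(φ(t)) = Σ_{i,j} J i j · (1 − cos(φ_i(t) − φ_j(t)))` is monotone
non-increasing along any solution, i.e., the Kuramoto dynamics is Lyapunov. -/
theorem kuramoto_energy_antitone
    {n : ℕ} (J : Fin n → Fin n → ℝ) (hJ : ∀ i j, J i j = J j i) (ω : ℝ)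
    (φ : Fin n → ℝ → ℝ)
    -- each phase is differentiable and satisfies the Kuramoto ODE
    (hode : ∀ i t, HasDerivAt (φ i)
      (ω + ∑ j, J i j * Real.sin (φ j t - φ i t)) t) :
    Antitone (fun t => ∑ i, ∑ j, J i j * (1 - Real.cos (φ i t - φ j t))) := by
  have key : ∀ t, HasDerivAt
      (fun t => ∑ i, ∑ j, J i j * (1 - Real.cos (φ i t - φ j t)))
      (∑ i, ∑ j, J i j * (Real.sin (φ i t - φ j t) *
        ((ω + ∑ k, J i k * Real.sin (φ k t - φ i t))
          - (ω + ∑ k, J j k * Real.sin (φ k t - φ j t))))) t := by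
    intro t
    refine HasDerivAt.fun_sum fun i _ => HasDerivAt.fun_sum fun j _ => ?_
    refine HasDerivAt.const_mul _ ?_
    have h1 := ((hode i t).fun_sub (hode j t)).cos
    have h2 := (hasDerivAt_const t (1:ℝ)).fun_sub h1
    convert h2 using 1
    · rfl
    ring
  apply antitone_of_deriv_nonpos
  · intro t
    exact (key t).differentiableAt
  · intro t
    rw [(key t).deriv]
    set S : Fin n → ℝ := fun i => ∑ j, J i j * Real.sin (φ i t - φ j t) with hS
    have hv : ∀ i, (ω + ∑ k, J i k * Real.sin (φ k t - φ i t)) = ω - S i := by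
      intro i
      have : (∑ k, J i k * Real.sin (φ k t - φ i t)) = -S i := by
        rw [hS, ← Finset.sum_neg_distrib]
        refine Finset.sum_congr rfl fun k _ => ?_
        rw [show φ k t - φ i t = -(φ i t - φ k t) by ring, Real.sin_neg]
        ring
      rw [this]
      ring
    have hrw : (∑ i, ∑ j, J i j * (Real.sin (φ i t - φ j t) *
        ((ω + ∑ k, J i k * Real.sin (φ k t - φ i t))
          - (ω + ∑ k, J j k * Real.sin (φ k t - φ j t)))))
        = (∑ i, ∑ j, J i j * Real.sin (φ i t - φ j t) * S j)
          - (∑ i, ∑ j, J i j * Real.sin (φ i t - φ j t) * S i) := by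
      rw [← Finset.sum_sub_distrib]
      refine Finset.sum_congr rfl fun i _ => ?_
      rw [← Finset.sum_sub_distrib]
      refine Finset.sum_congr rfl fun j _ => ?_
      rw [hv i, hv j]
      ring
    have hswap : (∑ i, ∑ j, J i j * Real.sin (φ i t - φ j t) * S j)
        = -(∑ i, ∑ j, J i j * Real.sin (φ i t - φ j t) * S i) := by
      rw [Finset.sum_comm, ← Finset.sum_neg_distrib]
      refine Finset.sum_congr rfl fun x _ => ?_
      rw [← Finset.sum_neg_distrib]
      refine Finset.sum_congr rfl fun y _ => ?_
      rw [hJ y x, show φ y t - φ x t = -(φ x t - φ y t) by ring, Real.sin_neg]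
      ring
    have hsq : (∑ i, ∑ j, J i j * Real.sin (φ i t - φ j t) * S i) = ∑ i, S i ^ 2 := by
      refine Finset.sum_congr rfl fun i _ => ?_
      rw [← Finset.sum_mul, hS]
      ring
    rw [hrw, hswap, hsq]
    have : (0:ℝ) ≤ ∑ i, S i ^ 2 := Finset.sum_nonneg fun i _ => sq_nonneg _
    linarith
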